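/- Let p be a prime, n ≥ 1 and 0 ≤ k ≤ n. If ξ_1,…,ξ_{n−k} ∈ (ZMod p)^{2n} are linearly independent over ZMod p and pairwise symplectically orthogonal (⟨ξ_i,ξ_j⟩ = 0 for all i,j), then there exist vectors ξ_{n−k+1},…,ξ_n and η_1,…,η_n in (ZMod p)^{2n} such that ξ_1,…,ξ_n,η_1,…,η_n is a hyperbolic basis of (ZMod p)^{2n}. -/

import Mathlib

open scoped BigOperators

/-- The phase space `(ZMod p)^n × (ZMod p)^n`, representing `(ZMod p)^{2n}`
written as pairs `(a|b)`. -/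
abbrev PV (p n : ℕ) := (Fin n → ZMod p) × (Fin n → ZMod p)

/-- The symplectic inner product `⟨x,y⟩ = ∑ i, (b i * c i - a i * d i)`
for `x = (a|b)`, `y = (c|d)`. -/
def symp {p n : ℕ} (x y : PV p n) : ZMod p :=
  ∑ i, (x.2 i * y.1 i - x.1 i * y.2 i)

/-- `ξ_1,…,ξ_n, η_1,…,η_n` form a hyperbolic basis of `(ZMod p)^{2n}`. -/
def IsHyperbolicBasis {p n : ℕ} (ξ η : Fin n → PV p n) : Prop :=
  LinearIndependent (ZMod p) (Sum.elim ξ η) ∧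
  Submodule.span (ZMod p) (Set.range (Sum.elim ξ η)) = ⊤ ∧
  (∀ i j, symp (ξ i) (η j) = if i = j then 1 else 0) ∧
  (∀ i j, symp (ξ i) (ξ j) = 0) ∧
  (∀ i j, symp (η i) (η j) = 0)

/-- Symplectic orthogonal complement `W^⊥` of a submodule `W`. -/
def sympOrtho {p n : ℕ} (W : Submodule (ZMod p) (PV p n)) :
    Submodule (ZMod p) (PV p n) where
  carrier := {y | ∀ x ∈ W, symp x y = 0}
  zero_mem' := by intro x hx; simp [symp]
  add_mem' := by
    intro a b ha hb x hx
    have h : symp x (a + b) = symp x a + symp x b := by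
      unfold symp
      rw [← Finset.sum_add_distrib]
      refine Finset.sum_congr rfl ?_
      intro i _
      simp only [Prod.fst_add, Prod.snd_add, Pi.add_apply]
      ring
    rw [h, ha x hx, hb x hx, add_zero]
  smul_mem' := by
    intro c a ha x hx
    have h : symp x (c • a) = c * symp x a := by
      unfold symp
      rw [Finset.mul_sum]
      refine Finset.sum_congr rfl ?_
      intro i _
      simp only [Prod.smul_fst, Prod.smul_snd, Pi.smul_apply, smul_eq_mul]
      ring
    rw [h, ha x hx, mul_zero]

/-- `ω = exp(2πi/p)`. -/
noncomputable def omg (p : ℕ) : ℂ := Complex.exp (2 * Real.pi * Complex.I / p)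

/-- The matrix `XZⁿ(v)` for `v = (a|b)`: entry `(r,c)` equals `ω^{b·c}`
if `r = c + a`, and `0` otherwise. -/
noncomputable def XZ {p n : ℕ} (v : PV p n) :
    Matrix (Fin n → ZMod p) (Fin n → ZMod p) ℂ :=
  fun r c => if r = c + v.1 then omg p ^ (∑ i, v.2 i * c i).val else 0

/-- The standard basis vector `δ_u`. -/
def delta {p n : ℕ} (u : Fin n → ZMod p) : (Fin n → ZMod p) → ℂ :=
  fun v => if v = u then 1 else 0

/-- Ordered product `∏_{i=1}^n (M i)^{u_i}` of matrices, powers via integer lifts. -/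
noncomputable def prodPow {p n : ℕ} [NeZero p]
    (M : Fin n → Matrix (Fin n → ZMod p) (Fin n → ZMod p) ℂ)
    (u : Fin n → ZMod p) : Matrix (Fin n → ZMod p) (Fin n → ZMod p) ℂ :=
  ((List.finRange n).map (fun i => (M i) ^ (u i).val)).prod

/-- Splice `e ∈ (ZMod p)^{n-k}` and `x ∈ (ZMod p)^k` into a vector of `(ZMod p)^n`,
identifying `(ZMod p)^n` with `(ZMod p)^{n-k} × (ZMod p)^k`. -/
def splice {p n k : ℕ} (hk : k ≤ n) (e : Fin (n - k) → ZMod p)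
    (x : Fin k → ZMod p) : Fin n → ZMod p :=
  fun i => Fin.append e x (Fin.cast (by omega) i)

/-- The index `n - k + i` of `Fin n`, for `i : Fin k`. -/
def lastIdx {n k : ℕ} (hk : k ≤ n) (i : Fin k) : Fin n :=
  ⟨n - k + i.1, by have := i.2; omega⟩

/-- Kronecker (tensor) product of two vectors. -/
def vecKron {ι : Type*} (f g : ι → ℂ) : ι × ι → ℂ := fun q => f q.1 * g q.2

/-- Entrywise complex conjugate of a vector. -/
def conjVec {ι : Type*} (f : ι → ℂ) : ι → ℂ := fun i => (starRingEnd ℂ) (f i)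


section Aux

open Module Submodule LinearMap

variable {p n : ℕ} [Fact p.Prime]

/-- `symp` as a bilinear form. -/
def sympB (p n : ℕ) : LinearMap.BilinForm (ZMod p) (PV p n) :=
  LinearMap.mk₂ (ZMod p) symp
    (fun x x' y => by
      unfold symp
      rw [← Finset.sum_add_distrib]
      refine Finset.sum_congr rfl fun i _ => ?_
      simp only [Prod.fst_add, Prod.snd_add, Pi.add_apply]
      ring)
    (fun c x y => by
      unfold symp
      rw [smul_eq_mul, Finset.mul_sum]
      refine Finset.sum_congr rfl fun i _ => ?_
      simp only [Prod.smul_fst, Prod.smul_snd, Pi.smul_apply, smul_eq_mul]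
      ring)
    (fun x y y' => by
      unfold symp
      rw [← Finset.sum_add_distrib]
      refine Finset.sum_congr rfl fun i _ => ?_
      simp only [Prod.fst_add, Prod.snd_add, Pi.add_apply]
      ring)
    (fun c x y => by
      unfold symp
      rw [smul_eq_mul, Finset.mul_sum]
      refine Finset.sum_congr rfl fun i _ => ?_
      simp only [Prod.smul_fst, Prod.smul_snd, Pi.smul_apply, smul_eq_mul]
      ring)

lemma sympB_apply (x y : PV p n) : sympB p n x y = symp x y := rfl

lemma symp_self (x : PV p n) : symp x x = 0 :=
  Finset.sum_eq_zero fun i _ => by ring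

lemma symp_skew (x y : PV p n) : symp x y = - symp y x := by
  refine eq_neg_of_add_eq_zero_left ?_
  unfold symp
  rw [← Finset.sum_add_distrib]
  exact Finset.sum_eq_zero fun i _ => by ring

lemma sympIsAlt : (sympB p n).IsAlt := fun x => symp_self x

lemma sympRefl : (sympB p n).IsRefl := (sympIsAlt).isRefl

lemma symp_add_left (x y z : PV p n) : symp (x + y) z = symp x z + symp y z := by
  show sympB p n (x + y) z = sympB p n x z + sympB p n y z
  rw [map_add, LinearMap.add_apply]

lemma symp_add_right (x y z : PV p n) : symp x (y + z) = symp x y + symp x z :=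
  map_add (sympB p n x) y z

lemma symp_smul_left (c : ZMod p) (x z : PV p n) : symp (c • x) z = c * symp x z := by
  show sympB p n (c • x) z = c * sympB p n x z
  rw [map_smul, LinearMap.smul_apply, smul_eq_mul]

lemma symp_smul_right (c : ZMod p) (x z : PV p n) : symp x (c • z) = c * symp x z := by
  show sympB p n x (c • z) = c * sympB p n x z
  rw [map_smul, smul_eq_mul]

lemma symp_sum_left {ι : Type*} (s : Finset ι) (f : ι → PV p n) (z : PV p n) :
    symp (∑ i ∈ s, f i) z = ∑ i ∈ s, symp (f i) z := by
  show sympB p n (∑ i ∈ s, f i) z = _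
  rw [map_sum, LinearMap.sum_apply]
  rfl

lemma symp_sum_right {ι : Type*} (s : Finset ι) (f : ι → PV p n) (z : PV p n) :
    symp z (∑ i ∈ s, f i) = ∑ i ∈ s, symp z (f i) :=
  map_sum (sympB p n z) f s

lemma symp_zero_right (x : PV p n) : symp x 0 = 0 := map_zero (sympB p n x)

lemma symp_single1 (x : PV p n) (i : Fin n) : symp x (Pi.single i 1, 0) = x.2 i := by
  unfold symp
  simp [Pi.single_apply]

lemma symp_single2 (x : PV p n) (i : Fin n) : symp x (0, Pi.single i 1) = - x.1 i := by
  unfold symp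
  simp [Pi.single_apply]

lemma sympNondeg : (sympB p n).Nondegenerate := by
  refine (LinearMap.IsRefl.nondegenerate_iff_separatingLeft (B := sympB p n) (sympRefl (p := p) (n := n))).mpr ?_
  intro x hx
  have h1 : x.1 = 0 := funext fun i => by
    have := hx (0, Pi.single i 1)
    rw [sympB_apply, symp_single2, neg_eq_zero] at this
    simpa using this
  have h2 : x.2 = 0 := funext fun i => by
    have := hx (Pi.single i 1, 0)
    rw [sympB_apply, symp_single1] at this
    simpa using this
  exact Prod.ext_iff.mpr ⟨h1, h2⟩

lemma finrank_PV : Module.finrank (ZMod p) (PV p n) = n + n := by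
  simp [Module.finrank_prod, Module.finrank_pi]

lemma ker_pi_eq {m : ℕ} (ξ : Fin m → PV p n) :
    LinearMap.ker (LinearMap.pi fun i => sympB p n (ξ i)) =
      (sympB p n).orthogonal (Submodule.span (ZMod p) (Set.range ξ)) := by
  ext v
  simp only [LinearMap.mem_ker, funext_iff, LinearMap.pi_apply, Pi.zero_apply,
    LinearMap.BilinForm.mem_orthogonal_iff]
  constructor
  · intro h w hw
    induction hw using Submodule.span_induction with
    | mem x hx => obtain ⟨i, rfl⟩ := hx; exact h i
    | zero => show sympB p n 0 v = 0; rw [map_zero]; rfl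
    | add x y _ _ hx hy =>
      show sympB p n (x + y) v = 0
      rw [map_add, LinearMap.add_apply, hx, hy, add_zero]
    | smul c x _ hx =>
      show sympB p n (c • x) v = 0
      rw [map_smul, LinearMap.smul_apply, hx, smul_zero]
  · intro h i
    exact h (ξ i) (Submodule.subset_span ⟨i, rfl⟩)

set_option maxHeartbeats 1000000 in
lemma finrank_ker_pi {m : ℕ} (ξ : Fin m → PV p n) (hli : LinearIndependent (ZMod p) ξ) :
    Module.finrank (ZMod p) (LinearMap.ker (LinearMap.pi fun i => sympB p n (ξ i)))
      = (n + n) - m := by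
  rw [ker_pi_eq, LinearMap.BilinForm.finrank_orthogonal sympNondeg,
    finrank_span_eq_card hli, finrank_PV, Fintype.card_fin]

lemma extend_one {m : ℕ} (hm : m < n) (ξ : Fin m → PV p n)
    (hli : LinearIndependent (ZMod p) ξ) (horth : ∀ i j, symp (ξ i) (ξ j) = 0) :
    ∃ v : PV p n, LinearIndependent (ZMod p) (Fin.snoc ξ v) ∧
      ∀ i j : Fin (m + 1), symp ((Fin.snoc ξ v : Fin (m + 1) → PV p n) i) ((Fin.snoc ξ v : Fin (m + 1) → PV p n) j) = (0 : ZMod p) := by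
  have hfk := finrank_ker_pi ξ hli
  have hfw : Module.finrank (ZMod p) (Submodule.span (ZMod p) (Set.range ξ)) = m := by
    rw [finrank_span_eq_card hli, Fintype.card_fin]
  have hnle : ¬ LinearMap.ker (LinearMap.pi fun i => sympB p n (ξ i)) ≤
      Submodule.span (ZMod p) (Set.range ξ) := by
    intro hle
    have := Submodule.finrank_mono hle
    omega
  obtain ⟨v, hvK, hvW⟩ := SetLike.not_le_iff_exists.mp hnle
  have hsymp : ∀ i, symp (ξ i) v = 0 := fun i => congrFun (LinearMap.mem_ker.mp hvK) i
  refine ⟨v, ?_, ?_⟩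
  · exact linearIndependent_fin_snoc.mpr ⟨hli, hvW⟩
  · intro i j
    induction i using Fin.lastCases with
    | last =>
      induction j using Fin.lastCases with
      | last => rw [Fin.snoc_last]; exact symp_self v
      | cast j => rw [Fin.snoc_last, Fin.snoc_castSucc, symp_skew, hsymp, neg_zero]
    | cast i =>
      induction j using Fin.lastCases with
      | last => rw [Fin.snoc_last, Fin.snoc_castSucc]; exact hsymp i
      | cast j => rw [Fin.snoc_castSucc, Fin.snoc_castSucc]; exact horth i j

lemma extend_full : ∀ (d m : ℕ) (hmn : m + d = n), ∀ ξ : Fin m → PV p n,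
    LinearIndependent (ZMod p) ξ → (∀ i j, symp (ξ i) (ξ j) = 0) →
    ∃ Ξ : Fin n → PV p n, (∀ i : Fin m, Ξ (Fin.castLE (by omega) i) = ξ i) ∧
      LinearIndependent (ZMod p) Ξ ∧ ∀ i j, symp (Ξ i) (Ξ j) = 0 := by
  intro d
  induction d with
  | zero =>
    intro m hmn ξ hli horth
    refine ⟨fun j => ξ (Fin.cast (by omega) j), fun i => rfl, ?_, fun i j => horth _ _⟩
    · exact hli.comp _ (Fin.cast_injective _)
  | succ d ih =>
    intro m hmn ξ hli horth
    obtain ⟨v, hli', horth'⟩ := extend_one (by omega) ξ hli horth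
    obtain ⟨Ξ, hΞ, h1, h2⟩ := ih (m + 1) (by omega) _ hli' horth'
    refine ⟨Ξ, fun i => ?_, h1, h2⟩
    have hc : Fin.castLE (show m ≤ n by omega) i
        = Fin.castLE (show m + 1 ≤ n by omega) (Fin.castSucc i) := rfl
    rw [hc, hΞ (Fin.castSucc i), Fin.snoc_castSucc]

lemma lagrangian_pair (ξ : Fin n → PV p n) (hli : LinearIndependent (ZMod p) ξ)
    (horth : ∀ i j, symp (ξ i) (ξ j) = 0) :
    ∃ η : Fin n → PV p n, (∀ i j, symp (ξ i) (η j) = if i = j then 1 else 0) ∧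
      ∀ i j, symp (η i) (η j) = 0 := by
  set T := LinearMap.pi fun i => sympB p n (ξ i) with hT
  have hker : Module.finrank (ZMod p) (LinearMap.ker T) = n := by
    rw [hT, finrank_ker_pi ξ hli]
    omega
  have hrange : LinearMap.range T = ⊤ := by
    apply Submodule.eq_top_of_finrank_eq
    have h := LinearMap.finrank_range_add_finrank_ker T
    rw [finrank_PV, hker] at h
    rw [Module.finrank_pi, Fintype.card_fin]
    omega
  have hsurj : Function.Surjective T := LinearMap.range_eq_top.mp hrange
  choose η' hη' using fun j => hsurj (Pi.single j 1)
  have hδ : ∀ i j, symp (ξ i) (η' j) = if i = j then 1 else 0 := by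
    intro i j
    have h := congrFun (hη' j) i
    rw [hT] at h
    simp only [LinearMap.pi_apply] at h
    rw [show (sympB p n (ξ i)) (η' j) = symp (ξ i) (η' j) from rfl] at h
    rw [h, Pi.single_apply]
  set A : Fin n → Fin n → ZMod p := fun i j => symp (η' i) (η' j) with hA
  set d : Fin n → Fin n → ZMod p := fun l j => if l < j then A l j else 0 with hd
  refine ⟨fun j => η' j + ∑ l, d l j • ξ l, ?_, ?_⟩
  · intro i j
    rw [symp_add_right, symp_sum_right]
    rw [Finset.sum_eq_zero fun l _ => by rw [symp_smul_right, horth, mul_zero]]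
    rw [add_zero, hδ]
  · intro i j
    have hXiEta : ∀ l j', symp (ξ l) (η' j' + ∑ l', d l' j' • ξ l')
        = if l = j' then 1 else 0 := by
      intro l j'
      rw [symp_add_right, symp_sum_right]
      rw [Finset.sum_eq_zero fun l' _ => by rw [symp_smul_right, horth, mul_zero]]
      rw [add_zero, hδ]
    rw [symp_add_left, symp_sum_left]
    have e1 : ∀ l, symp (d l i • ξ l) (η' j + ∑ l', d l' j • ξ l')
        = if l = j then d l i else 0 := by
      intro l
      rw [symp_smul_left, hXiEta]
      simp only [mul_ite, mul_one, mul_zero]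
    rw [Finset.sum_congr rfl fun l _ => e1 l, Finset.sum_ite_eq' Finset.univ j,
      if_pos (Finset.mem_univ j)]
    rw [symp_add_right, symp_sum_right]
    have e2 : ∀ l, symp (η' i) (d l j • ξ l) = if l = i then - d l j else 0 := by
      intro l
      rw [symp_smul_right, symp_skew, hδ]
      simp only [mul_ite, mul_one, mul_zero, mul_neg]
      by_cases h : l = i <;> simp [h]
    rw [Finset.sum_congr rfl fun l _ => e2 l, Finset.sum_ite_eq' Finset.univ i,
      if_pos (Finset.mem_univ i)]
    show A i j + - d i j + d j i = 0
    rcases lt_trichotomy i j with h | h | h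
    · rw [hd]
      simp only [if_pos h, if_neg (not_lt.mpr (le_of_lt h))]
      ring
    · subst h
      rw [hd]
      simp only [lt_self_iff_false, if_false]
      have : A i i = 0 := symp_self (η' i)
      rw [this]
      ring
    · rw [hd]
      simp only [if_pos h, if_neg (not_lt.mpr (le_of_lt h))]
      have : A i j = - A j i := symp_skew (η' i) (η' j)
      rw [this]
      ring

end Aux

/-- linearly independent, pairwise symplectically orthogonal
vectors `ξ_1,…,ξ_{n-k}` extend to a hyperbolic basis of `(ZMod p)^{2n}`. -/
theorem stmt0 (p n k : ℕ) [Fact p.Prime] (hn : 1 ≤ n) (hk : k ≤ n)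
    (ξ : Fin (n - k) → PV p n)
    (hli : LinearIndependent (ZMod p) ξ)
    (horth : ∀ i j, symp (ξ i) (ξ j) = 0) :
    ∃ Ξ η : Fin n → PV p n,
      (∀ i : Fin (n - k), Ξ (Fin.castLE (Nat.sub_le n k) i) = ξ i) ∧
      IsHyperbolicBasis Ξ η := by
  obtain ⟨Ξ, hcast, hliΞ, horthΞ⟩ := extend_full (n - (n - k)) (n - k) (by omega) ξ hli horth
  obtain ⟨η, hδ, hEE⟩ := lagrangian_pair Ξ hliΞ horthΞ
  have hLI : LinearIndependent (ZMod p) (Sum.elim Ξ η) := by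
    rw [Fintype.linearIndependent_iff]
    intro g hg
    have hg' : (∑ a, g (Sum.inl a) • Ξ a) + (∑ b, g (Sum.inr b) • η b) = 0 := by
      rw [← hg, Fintype.sum_sum_type]
      rfl
    have hB : ∀ j, g (Sum.inr j) = 0 := by
      intro j
      have h0 : symp (Ξ j) ((∑ a, g (Sum.inl a) • Ξ a) + (∑ b, g (Sum.inr b) • η b)) = 0 := by
        rw [hg', symp_zero_right]
      rw [symp_add_right, symp_sum_right, symp_sum_right] at h0
      rw [Finset.sum_eq_zero fun a _ => by
        rw [symp_smul_right, horthΞ, mul_zero]] at h0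
      rw [Finset.sum_congr rfl fun b _ => by
        rw [symp_smul_right, hδ j b, mul_ite, mul_one, mul_zero]] at h0
      rw [Finset.sum_ite_eq Finset.univ j, if_pos (Finset.mem_univ j), zero_add] at h0
      exact h0
    have hAh : ∀ j, g (Sum.inl j) = 0 := by
      intro j
      have h0 : symp ((∑ a, g (Sum.inl a) • Ξ a) + (∑ b, g (Sum.inr b) • η b)) (η j) = 0 := by
        rw [hg']
        rw [symp_skew, symp_zero_right, neg_zero]
      rw [symp_add_left, symp_sum_left, symp_sum_left] at h0
      rw [Finset.sum_eq_zero (s := Finset.univ) (f := fun b => symp (g (Sum.inr b) • η b) (η j))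
        fun b _ => by simp only [symp_smul_left, hEE, mul_zero]] at h0
      rw [Finset.sum_congr rfl fun a _ => by
        rw [symp_smul_left, hδ a j, mul_ite, mul_one, mul_zero]] at h0
      rw [Finset.sum_ite_eq' Finset.univ j, if_pos (Finset.mem_univ j), add_zero] at h0
      exact h0
    intro i
    cases i with
    | inl a => exact hAh a
    | inr b => exact hB b
  refine ⟨Ξ, η, hcast, hLI, ?_, hδ, horthΞ, hEE⟩
  apply hLI.span_eq_top_of_card_eq_finrank'
  rw [Fintype.card_sum, Fintype.card_fin, finrank_PV]
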